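/- For every quaternion x ∈ ℍ (over the reals, with imaginary units i, j, k), the expression x·x·i·x·i + i·x·x·i·x − i·x·i·x·x − x·i·x·x·i equals 0. In particular, this nonzero-looking quaternion polynomial expression vanishes identically on ℍ. -/

import Mathlib

open Quaternion

/-- The quaternion imaginary unit `i`. -/
def qi : ℍ[ℝ] := ⟨0, 1, 0, 0⟩

theorem quaternion_expression_vanishes (x : ℍ[ℝ]) :
    x * x * qi * x * qi + qi * x * x * qi * x
      - qi * x * qi * x * x - x * qi * x * x * qi = 0 := by
  have hq : qi.re = 0 ∧ qi.imI = 1 ∧ qi.imJ = 0 ∧ qi.imK = 0 := ⟨rfl, rfl, rfl, rfl⟩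
  ext <;> simp [Quaternion.ext_iff, mul_comm, hq] <;> ring
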